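/- For all positive integers m and r, the greatest common divisor of the numbers m / gcd(m, j) for j = 1, …, r equals m / gcd(m, lcm(1, …, r)). That is, gcd{ μ(m,j) : j = 1,…,r } = 𝓜(m,r). -/

import Mathlib

lemma nat_gcd_lcm_distrib (m a b : ℕ) :
    Nat.gcd m (Nat.lcm a b) = Nat.lcm (Nat.gcd m a) (Nat.gcd m b) := by
  rcases eq_or_ne m 0 with rfl | hm
  · simp
  rcases eq_or_ne a 0 with rfl | ha
  · simpa using Nat.dvd_antisymm (Nat.dvd_lcm_left _ _)
      (Nat.lcm_dvd dvd_rfl (Nat.gcd_dvd_left m b))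
  rcases eq_or_ne b 0 with rfl | hb
  · simpa using Nat.dvd_antisymm (Nat.dvd_lcm_right _ _)
      (Nat.lcm_dvd (Nat.gcd_dvd_left m a) dvd_rfl)
  have hga : Nat.gcd m a ≠ 0 := fun h => hm (Nat.eq_zero_of_gcd_eq_zero_left h)
  have hgb : Nat.gcd m b ≠ 0 := fun h => hm (Nat.eq_zero_of_gcd_eq_zero_left h)
  have hlab : Nat.lcm a b ≠ 0 := Nat.lcm_ne_zero ha hb
  apply Nat.eq_of_factorization_eq
  · exact fun h => hm (Nat.eq_zero_of_gcd_eq_zero_left h)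
  · exact Nat.lcm_ne_zero hga hgb
  intro p
  rw [Nat.factorization_gcd hm hlab, Nat.factorization_lcm hga hgb,
    Nat.factorization_lcm ha hb, Nat.factorization_gcd hm ha, Nat.factorization_gcd hm hb]
  simp only [Finsupp.inf_apply, Finsupp.sup_apply]
  exact min_max_distrib_left _ _ _

lemma div_dvd_div_of_dvd {a b n : ℕ} (hab : a ∣ b) (hbn : b ∣ n) : n / b ∣ n / a := by
  rcases eq_or_ne a 0 with rfl | ha
  · simp_all
  obtain ⟨k, rfl⟩ := hab
  obtain ⟨l, rfl⟩ := hbn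
  rcases eq_or_ne k 0 with rfl | hk
  · simp
  have hak : 0 < a * k := by positivity
  rw [Nat.mul_div_cancel_left _ hak, mul_assoc,
    Nat.mul_div_cancel_left _ (Nat.pos_of_ne_zero ha)]
  exact Dvd.intro_left k rfl

/-- `gcd{ m / gcd(m,j) : j = 1,…,r } = m / gcd(m, lcm(1,…,r))`. -/
theorem gcd_mu_eq_Mcal (m r : ℕ) (hm : 1 ≤ m) (hr : 1 ≤ r) :
    (Finset.Icc 1 r).gcd (fun j => m / Nat.gcd m j) =
      m / Nat.gcd m ((Finset.Icc 1 r).lcm id) := by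
  set s := Finset.Icc 1 r with hs
  set L := s.lcm id with hL
  set g := s.gcd (fun j => m / Nat.gcd m j) with hgdef
  have h1s : (1 : ℕ) ∈ s := by simp [hs, hr]
  have hm0 : m ≠ 0 := by omega
  have hgL_dvd_m : Nat.gcd m L ∣ m := Nat.gcd_dvd_left _ _
  -- g divides m
  have hgm : g ∣ m := by
    have := Finset.gcd_dvd (f := fun j => m / Nat.gcd m j) h1s
    simpa using this
  apply Nat.dvd_antisymm
  · -- g ∣ m / gcd m L
    rw [Nat.dvd_div_iff_mul_dvd hgL_dvd_m, mul_comm, ← Nat.dvd_div_iff_mul_dvd hgm]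
    -- suffices: gcd m L ∣ m / g
    -- distributivity: gcd m L = s.lcm (fun j => gcd m j)
    have hdistrib : Nat.gcd m L = s.lcm (fun j => Nat.gcd m j) := by
      rw [hL]
      induction s using Finset.induction with
      | empty => simp
      | insert _ _ hx ih =>
        rw [Finset.lcm_insert, Finset.lcm_insert, id]
        rw [show ∀ x y : ℕ, lcm x y = Nat.lcm x y from fun _ _ => rfl,
          nat_gcd_lcm_distrib, ih]
        rfl
    rw [hdistrib]
    apply Finset.lcm_dvd
    intro j hj
    rw [Nat.dvd_div_iff_mul_dvd hgm, mul_comm, ← Nat.dvd_div_iff_mul_dvd (Nat.gcd_dvd_left m j)]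
    exact Finset.gcd_dvd hj
  · apply Finset.dvd_gcd
    intro j hj
    exact div_dvd_div_of_dvd (Nat.dvd_gcd (Nat.gcd_dvd_left m j)
      ((Nat.gcd_dvd_right m j).trans (Finset.dvd_lcm hj))) hgL_dvd_m
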